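/- There exists a continuous function f : 2^ω → 2^ω such that for every x ∈ 2^ω the fiber f⁻¹[{x}] does not belong to I₀, i.e., f⁻¹[{x}] is not contained in any countable union of members of F₀. Consequently, the σ-ideal I₀ has property (M) but does not have property (D). -/

import Mathlib

set_option maxHeartbeats 1000000

open Set MeasureTheory

/-- The Cantor group `2^ω`: functions `ℕ → ZMod 2` with the product topology and
coordinatewise addition modulo 2. -/
abbrev CantorSp : Type := ℕ → ZMod 2

/-- The translate `B + x` of a set `B ⊆ 2^ω` by `x ∈ 2^ω`. -/
def cTranslate (B : Set CantorSp) (x : CantorSp) : Set CantorSp := (fun b => b + x) '' B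

/-- `F₀` : Borel sets `B ⊆ 2^ω` admitting a perfect (nonempty, closed, without
isolated points) set `P` of translations making `{B + x : x ∈ P}` disjoint. -/
def memF0 (B : Set CantorSp) : Prop :=
  MeasurableSet[borel CantorSp] B ∧
    ∃ P : Set CantorSp, Perfect P ∧ P.Nonempty ∧
      P.Pairwise fun x y => Disjoint (cTranslate B x) (cTranslate B y)

/-- `I₀`, the σ-ideal generated by `F₀`: `E ∈ I₀` iff `E` is contained in a countable
union of members of `F₀`. -/
def memI0 (E : Set CantorSp) : Prop :=
  ∃ f : ℕ → Set CantorSp, (∀ n, memF0 (f n)) ∧ E ⊆ ⋃ n, f n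

namespace BRS


lemma aux_binom (a : ℕ) : ∀ k, a^(k+1) + (k+1) * a^k ≤ (a+1)^(k+1) := by
  intro k
  induction k with
  | zero => simpa using by omega
  | succ k ih =>
    calc a^(k+2) + (k+2) * a^(k+1)
        ≤ (a+1) * (a^(k+1) + (k+1) * a^k) := by ring_nf; nlinarith [pow_nonneg (Nat.zero_le a) k]
      _ ≤ (a+1) * (a+1)^(k+1) := Nat.mul_le_mul_left _ ih
      _ = (a+1)^(k+2) := by ring

lemma key_ineq {n : ℕ} (hn : 2 ≤ n) : (n-1)^n * 2 ≤ n^n := by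
  obtain ⟨a, rfl⟩ : ∃ a, n = a + 1 := ⟨n - 1, by omega⟩
  have ha : 1 ≤ a := by omega
  have h := aux_binom a a
  have h2 : (a+1-1)^(a+1) * 2 = a^(a+1) + a^(a+1) := by
    simp [Nat.mul_two]
  rw [h2]
  have h3 : a^(a+1) ≤ (a+1) * a^a := by
    have h4 : a^(a+1) = a * a^a := by ring
    rw [h4]; exact Nat.mul_le_mul_right _ (by omega)
  omega

lemma pow_mul_two_pow_le : ∀ (K : ℕ) {n m : ℕ}, 2 ≤ n → n * K ≤ m → (n-1)^m * 2^K ≤ n^m := by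
  intro K
  induction K with
  | zero => intro n m hn _; simpa using Nat.pow_le_pow_left (by omega) m
  | succ K ih =>
    intro n m hn hm
    have hx : n * (K+1) = n*K + n := by ring
    have hnm : n ≤ m := by omega
    obtain ⟨m', rfl⟩ : ∃ m', m = n + m' := ⟨m - n, by omega⟩
    have hm' : n * K ≤ m' := by omega
    calc (n-1)^(n+m') * 2^(K+1)
        = ((n-1)^n * 2) * ((n-1)^m' * 2^K) := by ring
      _ ≤ n^n * n^m' := Nat.mul_le_mul (key_ineq hn) (ih hn hm')
      _ = n^(n+m') := by rw [pow_add]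

open Finset in
lemma exists_goodFun (L d : ℕ) (hbig : 2^(2^d) * (L*d+2) ≤ 2^(L-d)) (hdL : d ≤ L) :
    ∃ r : (Fin L → ZMod 2) → ZMod 2,
      ∀ (v : Fin d → (Fin L → ZMod 2)) (b : ZMod 2),
        ∃ c, ∀ ε : Fin d → ZMod 2, r (c + ∑ j, ε j • v j) = b := by
  classical
  by_contra hcon
  push_neg at hcon
  set V := (Fin L → ZMod 2) with hV
  have cardV : Fintype.card V = 2^L := by
    show Fintype.card (Fin L → ZMod 2) = 2^L; simp
  have cardF : Fintype.card (V → ZMod 2) = 2^(2^L) := by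
    rw [Fintype.card_fun, cardV]; simp [ZMod]
  -- the bad finsets
  set Bad : (Fin d → V) → ZMod 2 → Finset (V → ZMod 2) :=
    fun v b => univ.filter (fun r => ∀ c, ∃ ε : Fin d → ZMod 2, r (c + ∑ j, ε j • v j) ≠ b)
    with hBad
  -- each r is bad for some pair
  have hcover : (univ : Finset (V → ZMod 2)) ⊆
      (univ : Finset ((Fin d → V) × ZMod 2)).biUnion (fun p => Bad p.1 p.2) := by
    intro r _
    obtain ⟨v, b, hvb⟩ := hcon r
    exact mem_biUnion.2 ⟨(v, b), mem_univ _, by simp [hBad, hvb]⟩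
  -- per-pair bound
  have hper : ∀ (v : Fin d → V) (b : ZMod 2),
      (Bad v b).card * 2^(L*d+2) ≤ 2^(2^L) := by
    intro v b
    set W := Submodule.span (ZMod 2) (Set.range v) with hW
    obtain ⟨Q, hQ⟩ := Submodule.exists_isCompl W
    set e := Submodule.prodEquivOfIsCompl W Q hQ with he
    have happ : ∀ (w : W) (q : Q), e (w, q) = (w : V) + (q : V) := by
      intro w q
      simp [he, Submodule.coe_prodEquivOfIsCompl']
    -- injection into "everywhere nonconstant" functions
    set Φ : (V → ZMod 2) → (Q → (W → ZMod 2)) := fun r q w => r (e (w, q)) with hΦ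
    have hΦinj : Function.Injective Φ := by
      intro r r' h
      funext x
      have := congrFun (congrFun h (e.symm x).2) (e.symm x).1
      simpa [hΦ] using this
    set T : Finset (Q → (W → ZMod 2)) :=
      univ.filter (fun g => ∀ q, g q ≠ Function.const W b) with hT
    have hmaps : ∀ r ∈ Bad v b, Φ r ∈ T := by
      intro r hr
      rw [hBad, mem_filter] at hr
      rw [hT, mem_filter]
      refine ⟨mem_univ _, fun q hconst => ?_⟩
      obtain ⟨ε, hε⟩ := hr.2 (q : V)
      have hsmem : (∑ j, ε j • v j) ∈ W := by
        refine Submodule.sum_mem _ (fun j _ => Submodule.smul_mem _ _ ?_)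
        exact Submodule.subset_span ⟨j, rfl⟩
      have := congrFun hconst ⟨_, hsmem⟩
      simp only [hΦ, Function.const_apply] at this
      rw [happ] at this
      rw [add_comm] at this
      exact hε this
    have hcard1 : (Bad v b).card ≤ T.card :=
      Finset.card_le_card_of_injOn Φ hmaps hΦinj.injOn
    -- card of T
    have cardT : T.card = (2^(Fintype.card W) - 1)^(Fintype.card Q) := by
      rw [hT, ← Fintype.card_subtype]
      have eqv : {g : Q → (W → ZMod 2) // ∀ q, g q ≠ Function.const W b} ≃
          (Q → {f : W → ZMod 2 // f ≠ Function.const W b}) :=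
        Equiv.subtypePiEquivPi (p := fun _ f => f ≠ Function.const W b)
      rw [Fintype.card_congr eqv, Fintype.card_pi]
      have cS : Fintype.card {f : W → ZMod 2 // f ≠ Function.const W b}
          = 2^(Fintype.card W) - 1 := by
        have := Fintype.card_subtype_compl (fun f : W → ZMod 2 => f = Function.const W b)
        rw [this, Fintype.card_subtype_eq, Fintype.card_fun]
        simp [ZMod]
      simp [cS]
    -- card identities
    have cardWQ : Fintype.card W * Fintype.card Q = 2^L := by
      have := Fintype.card_congr e.toEquiv
      rwa [Fintype.card_prod, cardV] at this
    have cardWle : Fintype.card W ≤ 2^d := by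
      have hsurj : Function.Surjective
          (fun ε : Fin d → ZMod 2 => (⟨∑ j, ε j • v j, by
            refine Submodule.sum_mem _ (fun j _ => Submodule.smul_mem _ _ ?_)
            exact Submodule.subset_span ⟨j, rfl⟩⟩ : W)) := by
        rintro ⟨x, hx⟩
        rw [hW, Submodule.mem_span_range_iff_exists_fun] at hx
        obtain ⟨ε, hε⟩ := hx
        exact ⟨ε, by simp [hε]⟩
      have := Fintype.card_le_of_surjective _ hsurj
      calc Fintype.card W ≤ Fintype.card (Fin d → ZMod 2) := this
        _ = 2^d := by rw [Fintype.card_fun]; simp [ZMod]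
    have cardWpos : 1 ≤ Fintype.card W := Fintype.card_pos
    -- numeric conclusion
    set cW := Fintype.card W
    set cQ := Fintype.card Q
    have hn2 : 2 ≤ 2^cW := by
      calc 2 = 2^1 := (pow_one 2).symm
        _ ≤ 2^cW := Nat.pow_le_pow_right (by norm_num) cardWpos
    have hcQ : 2^(L-d) ≤ cQ := by
      have h1 : 2^(L-d) * 2^d = 2^L := by
        rw [← pow_add]; congr 1; omega
      have h2 : 2^(L-d) * 2^d ≤ cQ * 2^d := by
        rw [h1, ← cardWQ]
        calc cW * cQ ≤ 2^d * cQ := Nat.mul_le_mul_right _ cardWle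
          _ = cQ * 2^d := Nat.mul_comm _ _
      exact Nat.le_of_mul_le_mul_right h2 (Nat.pow_pos (by norm_num))
    have hKle : 2^cW * (L*d+2) ≤ cQ := by
      calc 2^cW * (L*d+2) ≤ 2^(2^d) * (L*d+2) :=
            Nat.mul_le_mul_right _ (Nat.pow_le_pow_right (by norm_num) cardWle)
        _ ≤ 2^(L-d) := hbig
        _ ≤ cQ := hcQ
    have hmain := pow_mul_two_pow_le (L*d+2) hn2 hKle
    have hfin : (2^cW)^cQ = 2^(2^L) := by
      rw [← pow_mul, cardWQ]
    calc (Bad v b).card * 2^(L*d+2) ≤ T.card * 2^(L*d+2) :=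
          Nat.mul_le_mul_right _ hcard1
      _ = (2^cW - 1)^cQ * 2^(L*d+2) := by rw [cardT]
      _ ≤ (2^cW)^cQ := hmain
      _ = 2^(2^L) := hfin
  -- union bound
  have cardPairs : Fintype.card ((Fin d → V) × ZMod 2) = 2^(L*d+1) := by
    have h1 : Fintype.card ((Fin d → V) × ZMod 2) = (2^L)^d * 2 := by
      rw [Fintype.card_prod, Fintype.card_fun, cardV]
      simp [ZMod]
    rw [h1, ← pow_mul, pow_succ]
  have htot : 2^(2^L) ≤ ∑ p : ((Fin d → V) × ZMod 2), (Bad p.1 p.2).card := by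
    calc 2^(2^L) = (univ : Finset (V → ZMod 2)).card := by rw [card_univ, cardF]
      _ ≤ ((univ : Finset ((Fin d → V) × ZMod 2)).biUnion (fun p => Bad p.1 p.2)).card :=
          Finset.card_le_card hcover
      _ ≤ ∑ p : ((Fin d → V) × ZMod 2), (Bad p.1 p.2).card := Finset.card_biUnion_le
  have hsum : (∑ p : ((Fin d → V) × ZMod 2), (Bad p.1 p.2).card) * 2^(L*d+2)
      ≤ 2^(L*d+1) * 2^(2^L) := by
    rw [Finset.sum_mul]
    calc ∑ p : ((Fin d → V) × ZMod 2), (Bad p.1 p.2).card * 2^(L*d+2)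
        ≤ ∑ _p : ((Fin d → V) × ZMod 2), 2^(2^L) :=
          Finset.sum_le_sum (fun p _ => hper p.1 p.2)
      _ = 2^(L*d+1) * 2^(2^L) := by
          rw [Finset.sum_const, card_univ, cardPairs]; simp [Nat.smul_one_eq_cast]
  -- contradiction
  have h1 : 2^(2^L) * 2^(L*d+2) ≤ 2^(L*d+1) * 2^(2^L) :=
    le_trans (Nat.mul_le_mul_right _ htot) hsum
  have h2 : 2^(L*d+2) = 2 * 2^(L*d+1) := by rw [pow_succ]; ring
  have h3 : (0:ℕ) < 2^(2^L) := Nat.pow_pos (by norm_num)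
  have h4 : (0:ℕ) < 2^(L*d+1) := Nat.pow_pos (by norm_num)
  nlinarith


lemma hbig_aux (d : ℕ) : 2^(2^d) * (2^(3*d+4) * d + 2) ≤ 2^(2^(3*d+4) - d) := by
  set L := 2^(3*d+4) with hL
  have hd2 : d < 2^d := Nat.lt_two_pow_self (n := d)
  have h1 : L * d + 2 ≤ 2^(4*d+5) := by
    have ha : L * d ≤ L * 2^d := Nat.mul_le_mul_left _ (le_of_lt hd2)
    have hLd : L * 2^d = 2^(4*d+4) := by
      rw [hL, ← pow_add]
      congr 1
      ring
    have hb : (2:ℕ) ≤ 2^(4*d+4) := by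
      calc (2:ℕ) = 2^1 := (pow_one 2).symm
        _ ≤ 2^(4*d+4) := Nat.pow_le_pow_right (by norm_num) (by omega)
    have hc : 2^(4*d+4) + 2^(4*d+4) = 2^(4*d+5) := by
      rw [← two_mul, ← pow_succ']
    omega
  have h3 : 2^d + (4*d+5) ≤ L - d := by
    have hkey : 2^d + 5*d + 5 ≤ L := by
      have h8 : 2^(d+4) ≤ 2^(3*d+4) := Nat.pow_le_pow_right (by norm_num) (by omega)
      have h9 : 2^(d+4) = 16 * 2^d := by rw [pow_add]; ring
      have h10 : d + 1 ≤ 2^d := hd2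
      have h11 : 16 * 2^d ≥ 2^d + 15*(d+1) := by nlinarith
      omega
    omega
  calc 2^(2^d) * (L*d+2) ≤ 2^(2^d) * 2^(4*d+5) := Nat.mul_le_mul_left _ h1
    _ = 2^(2^d + (4*d+5)) := by rw [← pow_add]
    _ ≤ 2^(L-d) := Nat.pow_le_pow_right (by norm_num) h3



def cyl (x : CantorSp) (n : ℕ) : Set CantorSp := {y | ∀ i < n, y i = x i}

lemma isOpen_cyl (x : CantorSp) (n : ℕ) : IsOpen (cyl x n) := by
  have h : cyl x n = ⋂ i ∈ Finset.range n, (fun y : CantorSp => y i) ⁻¹' {x i} := by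
    ext y
    simp [cyl]
  rw [h]
  exact isOpen_biInter_finset fun i _ =>
    (continuous_apply i).isOpen_preimage _ (isOpen_discrete _)

lemma mem_cyl_self (x : CantorSp) (n : ℕ) : x ∈ cyl x n := fun _ _ => rfl

lemma exists_cyl_subset {U : Set CantorSp} (hU : IsOpen U) {x : CantorSp} (hx : x ∈ U) :
    ∃ n, cyl x n ⊆ U := by
  have hnh : U ∈ nhds x := hU.mem_nhds hx
  rw [nhds_pi, Filter.mem_pi] at hnh
  obtain ⟨I, Ifin, t, ht, hsub⟩ := hnh
  obtain ⟨n, hn⟩ : ∃ n : ℕ, ∀ i ∈ I, i < n := by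
    obtain ⟨m, hm⟩ := Ifin.bddAbove
    exact ⟨m + 1, fun i hi => Nat.lt_succ_of_le (hm hi)⟩
  refine ⟨n, fun y hy => hsub ?_⟩
  intro i hi
  have hyi : y i = x i := hy i (hn i hi)
  rw [hyi]
  exact mem_of_mem_nhds (ht i)

lemma not_isMeagre_of_isOpen {U : Set CantorSp} (hU : IsOpen U) (hne : U.Nonempty) :
    ¬ IsMeagre U := by
  intro h
  have hd : Dense Uᶜ := dense_of_mem_residual h
  obtain ⟨y, hyU, hyc⟩ := hd.inter_open_nonempty U hU hne
  exact hyc hyU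

lemma exists_pair {A : Set CantorSp} (hA : BaireMeasurableSet A) (hnm : ¬ IsMeagre A) :
    ∃ m : ℕ, ∀ v : CantorSp, (∀ i < m, v i = 0) → ∃ y, y ∈ A ∧ y + v ∈ A := by
  obtain ⟨U, hUo, hAU⟩ := hA.residualEq_isOpen
  have hD : {y | y ∈ A ↔ y ∈ U} ∈ residual CantorSp := Filter.eventuallyEq_set.mp hAU
  have hUne : U.Nonempty := by
    rcases Set.eq_empty_or_nonempty U with h | h
    · exfalso
      apply hnm
      rw [IsMeagre]
      refine Filter.mem_of_superset hD ?_
      intro y hy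
      simp only [Set.mem_setOf_eq] at hy
      intro hyA
      rw [h] at hy
      exact (hy.mp hyA)
    · exact h
  obtain ⟨x, hx⟩ := hUne
  obtain ⟨m, hm⟩ := exists_cyl_subset hUo hx
  refine ⟨m, fun v hv => ?_⟩
  have hD' : ((fun y : CantorSp => y + v) ⁻¹' {y | y ∈ A ↔ y ∈ U}) ∈ residual CantorSp := by
    have h2 : {y : CantorSp | y ∈ A ↔ y ∈ U} ∈
        Filter.map (Homeomorph.addRight v) (residual CantorSp) := by
      rw [Homeomorph.residual_map_eq]
      exact hD
    have h3 := Filter.mem_map.mp h2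
    rwa [Homeomorph.coe_addRight] at h3
  have hR := Filter.inter_mem hD hD'
  have hdense := dense_of_mem_residual hR
  obtain ⟨y, hy_cyl, hyD, hyD'⟩ :
      (cyl x m ∩ ({y | y ∈ A ↔ y ∈ U} ∩ ((fun y : CantorSp => y + v) ⁻¹' {y | y ∈ A ↔ y ∈ U}))).Nonempty := by
    obtain ⟨y, h1, h2⟩ := hdense.inter_open_nonempty (cyl x m) (isOpen_cyl x m) ⟨x, mem_cyl_self x m⟩
    exact ⟨y, h1, h2⟩
  have hyv_cyl : y + v ∈ cyl x m := by
    intro i hi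
    have : (y + v) i = y i + v i := rfl
    rw [this, hv i hi, add_zero]
    exact hy_cyl i hi
  refine ⟨y, ?_, ?_⟩
  · exact hyD.mpr (hm hy_cyl)
  · exact (Set.mem_setOf_eq ▸ hyD').mpr (hm hyv_cyl)


/-! ### Block structure -/

def Lk (k : ℕ) : ℕ := 2^(3*(k+1)+4)

lemma Lk_pos (k : ℕ) : 0 < Lk k := Nat.pow_pos (by norm_num)

lemma hdL_Lk (k : ℕ) : k + 1 ≤ Lk k := by
  have := Nat.lt_two_pow_self (n := k+1)
  have h2 : 2^(k+1) ≤ 2^(3*(k+1)+4) := Nat.pow_le_pow_right (by norm_num) (by omega)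
  unfold Lk
  omega

def Nblk : ℕ → ℕ
  | 0 => 0
  | k+1 => Nblk k + Lk k

lemma Nblk_succ (k : ℕ) : Nblk (k+1) = Nblk k + Lk k := rfl

lemma Nblk_mono : Monotone Nblk := by
  apply monotone_nat_of_le_succ
  intro k
  rw [Nblk_succ]
  omega

lemma self_le_Nblk (k : ℕ) : k ≤ Nblk k := by
  induction k with
  | zero => simp [Nblk]
  | succ k ih =>
    have := Lk_pos k
    rw [Nblk_succ]
    omega

lemma exists_blk (i : ℕ) : ∃ k, i < Nblk (k+1) := by
  refine ⟨i, ?_⟩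
  have := self_le_Nblk (i+1)
  omega

def blk (i : ℕ) : ℕ := Nat.find (exists_blk i)

lemma blk_spec (i : ℕ) : i < Nblk (blk i + 1) := Nat.find_spec (exists_blk i)

lemma Nblk_blk_le (i : ℕ) : Nblk (blk i) ≤ i := by
  rcases h : blk i with _ | k
  · simp [Nblk]
  · have hk : k < blk i := by omega
    have hmin := Nat.find_min (exists_blk i) (show k < Nat.find (exists_blk i) from hk)
    push_neg at hmin
    exact hmin

lemma blk_eq (k j : ℕ) (hj : j < Lk k) : blk (Nblk k + j) = k := by
  have h1 : Nblk k + j < Nblk (k+1) := by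
    rw [Nblk_succ]; omega
  apply le_antisymm
  · exact Nat.find_le h1
  · by_contra hlt
    push_neg at hlt
    have h2 := blk_spec (Nblk k + j)
    have h3 : Nblk (blk (Nblk k + j) + 1) ≤ Nblk k := Nblk_mono (by omega)
    omega

lemma sub_Nblk_lt (i : ℕ) : i - Nblk (blk i) < Lk (blk i) := by
  have h1 := blk_spec i
  have h2 := Nblk_blk_le i
  rw [Nblk_succ] at h1
  omega

/-! ### The function -/

def Rk (k : ℕ) (x : CantorSp) : Fin (Lk k) → ZMod 2 := fun j => x (Nblk k + j)

lemma continuous_Rk (k : ℕ) : Continuous (Rk k) :=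
  continuous_pi (fun _ => continuous_apply _)

noncomputable def rblk (k : ℕ) : (Fin (Lk k) → ZMod 2) → ZMod 2 :=
  (exists_goodFun (Lk k) (k+1) (hbig_aux (k+1)) (hdL_Lk k)).choose

lemma rblk_spec (k : ℕ) :
    ∀ (v : Fin (k+1) → (Fin (Lk k) → ZMod 2)) (b : ZMod 2),
      ∃ c, ∀ ε : Fin (k+1) → ZMod 2, rblk k (c + ∑ j, ε j • v j) = b :=
  (exists_goodFun (Lk k) (k+1) (hbig_aux (k+1)) (hdL_Lk k)).choose_spec

noncomputable def fmain : CantorSp → CantorSp := fun x k => rblk k (Rk k x)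

lemma continuous_fmain : Continuous fmain := by
  apply continuous_pi
  intro k
  exact (continuous_of_discreteTopology (f := rblk k)).comp (continuous_Rk k)

lemma zmod2_add_self (a : ZMod 2) : a + a = 0 := by revert a; decide

/-! ### Main positivity result -/

theorem fiber_not_memI0 (z : CantorSp) : ¬ memI0 (fmain ⁻¹' {z}) := by
  classical
  rintro ⟨B, hB, hsub⟩
  have hmeas : ∀ n, MeasurableSet[borel CantorSp] (B n) := fun n => (hB n).1
  choose P hPperf hPne hPdisj using fun n => (hB n).2
  set lab : ℕ → ℕ := fun ℓ => (Nat.unpair ℓ).1 with hlab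
  -- deep pairs in the perfect sets
  have hpair : ∀ ℓ : ℕ, ∃ pq : CantorSp × CantorSp, pq.1 ∈ P (lab ℓ) ∧ pq.2 ∈ P (lab ℓ) ∧
      pq.1 ≠ pq.2 ∧ ∀ i < Nblk ℓ, pq.1 i = pq.2 i := by
    intro ℓ
    obtain ⟨a, ha⟩ := hPne (lab ℓ)
    have hacc : AccPt a (Filter.principal (P (lab ℓ))) := (hPperf (lab ℓ)).acc a ha
    rw [accPt_iff_nhds] at hacc
    obtain ⟨b, ⟨hbc, hbP⟩, hba⟩ :=
      hacc (cyl a (Nblk ℓ)) ((isOpen_cyl a _).mem_nhds (mem_cyl_self a _))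
    exact ⟨(a, b), ha, hbP, fun h => hba h.symm, fun i hi => (hbc i hi).symm⟩
  choose pq hp1 hp2 hpne' hpag using hpair
  set e : ℕ → CantorSp := fun ℓ => (pq ℓ).1 + (pq ℓ).2 with he
  have hedeep : ∀ ℓ i, i < Nblk ℓ → e ℓ i = 0 := by
    intro ℓ i hi
    have h1 := hpag ℓ i hi
    show (pq ℓ).1 i + (pq ℓ).2 i = 0
    rw [h1]
    exact zmod2_add_self _
  -- the block constants
  have hc : ∀ k, ∃ c, ∀ ε : Fin (k+1) → ZMod 2,
      rblk k (c + ∑ j, ε j • Rk k (e (j : ℕ))) = z k :=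
    fun k => rblk_spec k (fun j : Fin (k+1) => Rk k (e (j : ℕ))) (z k)
  choose cb hcb using hc
  -- a glued base point
  set cbase : CantorSp := fun i => cb (blk i) ⟨i - Nblk (blk i), sub_Nblk_lt i⟩ with hcbase
  have hcbase_eval : ∀ (k : ℕ) (j : Fin (Lk k)), cbase (Nblk k + (j : ℕ)) = cb k j := by
    intro k j
    have hblk := blk_eq k (j : ℕ) j.isLt
    have haux : ∀ (m : ℕ) (hm : m = k) (h1 : Nblk k + (j:ℕ) - Nblk m < Lk m),
        cb m ⟨Nblk k + (j:ℕ) - Nblk m, h1⟩ = cb k j := by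
      rintro m rfl h1
      congr 1
      ext
      simp
    rw [hcbase]
    simp only
    exact haux (blk (Nblk k + (j:ℕ))) hblk _
  -- the affine map into the fiber
  set H : CantorSp → CantorSp := fun y i =>
    cbase i + ∑ j ∈ Finset.range (blk i + 1), y j * e j i with hH
  have hRkH : ∀ y k, Rk k (H y) = cb k + ∑ j : Fin (k+1), y (j : ℕ) • Rk k (e (j : ℕ)) := by
    intro y k
    funext j'
    have hblk : blk (Nblk k + (j' : ℕ)) = k := blk_eq k _ j'.isLt
    show H y (Nblk k + (j' : ℕ)) = _
    rw [hH]
    simp only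
    rw [hcbase_eval k j', hblk]
    have hsum : ∑ j ∈ Finset.range (k + 1), y j * e j (Nblk k + (j' : ℕ)) =
        ∑ j : Fin (k+1), y (j : ℕ) * e (j : ℕ) (Nblk k + (j' : ℕ)) :=
      (Fin.sum_univ_eq_sum_range (fun j => y j * e j (Nblk k + (j' : ℕ))) (k+1)).symm
    rw [hsum]
    simp [Pi.add_apply, Finset.sum_apply, Pi.smul_apply, smul_eq_mul, Rk]
  have hHfib : ∀ y, fmain (H y) = z := by
    intro y
    funext k
    show rblk k (Rk k (H y)) = z k
    rw [hRkH]
    exact hcb k (fun j => y (j : ℕ))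
  have hHcont : Continuous H := by
    apply continuous_pi
    intro i
    have hs : Continuous (fun y : CantorSp =>
        ∑ j ∈ Finset.range (blk i + 1), y j * e j i) := by
      apply continuous_finset_sum
      intro j _
      exact (continuous_of_discreteTopology (f := fun a : ZMod 2 => a * e j i)).comp
        (continuous_apply j)
    exact (continuous_of_discreteTopology (f := fun p : ZMod 2 × ZMod 2 => p.1 + p.2)).comp
      (continuous_const.prodMk hs)
  -- Baire category upstairs
  set A : ℕ → Set CantorSp := fun n => H ⁻¹' (B n) with hA
  have hHmeas : @Measurable CantorSp CantorSp (borel _) (borel _) H :=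
    hHcont.borel_measurable
  have hAbm : ∀ n, BaireMeasurableSet (A n) := by
    intro n
    have h1 : MeasurableSet[borel CantorSp] (A n) := hHmeas (hmeas n)
    exact h1.eventuallyMeasurableSet
  have hAcover : (Set.univ : Set CantorSp) = ⋃ n, A n := by
    ext y
    simp only [Set.mem_univ, true_iff, Set.mem_iUnion]
    have hy : H y ∈ fmain ⁻¹' {z} := by
      have h2 := hHfib y
      simpa [Set.mem_preimage, Set.mem_singleton_iff] using h2
    have h3 := hsub hy
    rw [Set.mem_iUnion] at h3
    obtain ⟨n, hn⟩ := h3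
    exact ⟨n, hn⟩
  have hex : ∃ n, ¬ IsMeagre (A n) := by
    by_contra hall
    push_neg at hall
    have h1 : IsMeagre (⋃ n, A n) := isMeagre_iUnion hall
    rw [← hAcover] at h1
    have hd : Dense ((Set.univ : Set CantorSp)ᶜ) := dense_of_mem_residual h1
    obtain ⟨y, hy⟩ := hd.nonempty
    simp at hy
  obtain ⟨n₀, hn₀⟩ := hex
  obtain ⟨m, hm⟩ := exists_pair (hAbm n₀) hn₀
  set ℓ := Nat.pair n₀ m with hℓ
  have hlabℓ : lab ℓ = n₀ := by simp [hlab, hℓ, Nat.unpair_pair]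
  have hmℓ : m ≤ ℓ := Nat.right_le_pair n₀ m
  set δ : CantorSp := fun i => if i = ℓ then 1 else 0 with hδ
  obtain ⟨y, hy1, hy2⟩ := hm δ (by
    intro i hi
    rw [hδ]
    simp only
    rw [if_neg (by omega)])
  -- key computation
  have hkey : H (y + δ) = H y + e ℓ := by
    funext i
    show cbase i + ∑ j ∈ Finset.range (blk i + 1), (y j + δ j) * e j i
        = (cbase i + ∑ j ∈ Finset.range (blk i + 1), y j * e j i) + e ℓ i
    have hsplit : ∀ j ∈ Finset.range (blk i + 1),
        (y j + δ j) * e j i = y j * e j i + δ j * e j i := fun j _ => by ring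
    rw [Finset.sum_congr rfl hsplit, Finset.sum_add_distrib]
    have hδe : ∀ j ∈ Finset.range (blk i + 1),
        δ j * e j i = if j = ℓ then e ℓ i else 0 := by
      intro j _
      by_cases h : j = ℓ
      · simp [hδ, h]
      · simp [hδ, h]
    rw [Finset.sum_congr rfl hδe, Finset.sum_ite_eq' (Finset.range (blk i + 1)) ℓ (fun _ => e ℓ i)]
    by_cases hcase : ℓ ∈ Finset.range (blk i + 1)
    · rw [if_pos hcase]
      ring
    · rw [if_neg hcase]
      have hℓgt : blk i + 1 ≤ ℓ := by
        simp only [Finset.mem_range] at hcase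
        omega
      have hi0 : e ℓ i = 0 := by
        apply hedeep
        have h1 := blk_spec i
        have h2 : Nblk (blk i + 1) ≤ Nblk ℓ := Nblk_mono hℓgt
        omega
      rw [hi0]
      ring
  have hyB : H y ∈ B n₀ := hy1
  have hyB2 : H y + e ℓ ∈ B n₀ := by
    rw [← hkey]; exact hy2
  have hdisj := hPdisj n₀ (hlabℓ ▸ hp1 ℓ) (hlabℓ ▸ hp2 ℓ) (hpne' ℓ)
  have hw2 : H y + (pq ℓ).2 ∈ cTranslate (B n₀) ((pq ℓ).1) := by
    refine ⟨H y + e ℓ, hyB2, ?_⟩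
    rw [he]
    simp only
    have h2 : (pq ℓ).1 + (pq ℓ).1 = 0 := funext fun i => zmod2_add_self _
    have : H y + ((pq ℓ).1 + (pq ℓ).2) + (pq ℓ).1
        = H y + (pq ℓ).2 + ((pq ℓ).1 + (pq ℓ).1) := by abel
    rw [this, h2, add_zero]
  have hw1 : H y + (pq ℓ).2 ∈ cTranslate (B n₀) ((pq ℓ).2) := ⟨H y, hyB, rfl⟩
  exact Set.disjoint_left.mp hdisj hw2 hw1


end BRS

/-- There is a continuous `f : 2^ω → 2^ω` all of whose fibers are `I₀`-positive;
consequently `I₀` has property (M) and does not have property (D). -/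
theorem stmt4 :
    (∃ f : CantorSp → CantorSp, Continuous f ∧ ∀ x : CantorSp, ¬ memI0 (f ⁻¹' {x})) ∧
    -- property (M) for `I₀`
    (∃ f : CantorSp → CantorSp, @Measurable CantorSp CantorSp (borel CantorSp) (borel CantorSp) f ∧
      ∀ x : CantorSp, ¬ memI0 (f ⁻¹' {x})) ∧
    -- `I₀` does not have property (D)
    ¬ ∃ B : Set CantorSp, MeasurableSet[borel CantorSp] B ∧ ¬ memI0 B ∧
      ∃ P : Set CantorSp, Perfect P ∧ P.Nonempty ∧
        P.Pairwise fun x y => Disjoint (cTranslate B x) (cTranslate B y) := by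
  refine ⟨⟨BRS.fmain, BRS.continuous_fmain, BRS.fiber_not_memI0⟩,
    ⟨BRS.fmain, BRS.continuous_fmain.borel_measurable, BRS.fiber_not_memI0⟩, ?_⟩
  rintro ⟨B, hmeas, hnot, P, hP, hPne, hdisj⟩
  exact hnot ⟨fun _ => B, fun _ => ⟨hmeas, P, hP, hPne, hdisj⟩,
    fun x hx => Set.mem_iUnion.2 ⟨0, hx⟩⟩
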